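/- The pointwise infimum of an arbitrary nonempty family of distance-like functions on a metric space, if finite everywhere, is distance-like. -/

import Mathlib

open Filter Topology Metric

noncomputable section

/-- A function `f : X → ℝ` is distance-like (Gromov) if for every `x` and every
`t ≤ f x`, the distance from `x` to the sublevel set `L_t = {y | f y ≤ t}` equals
`f x - t`. -/
def DistanceLike {X : Type*} [MetricSpace X] (f : X → ℝ) : Prop :=
  ∀ x t, t ≤ f x → sInf (dist x '' {y | f y ≤ t}) = f x - t

/-- A geodesic metric space: any two points are joined by a geodesic segment. -/
def IsGeodesicSpace (X : Type*) [MetricSpace X] : Prop :=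
  ∀ x y : X, ∃ γ : ℝ → X, γ 0 = x ∧ γ (dist x y) = y ∧
    ∀ s ∈ Set.Icc (0 : ℝ) (dist x y), ∀ t ∈ Set.Icc (0 : ℝ) (dist x y),
      dist (γ s) (γ t) = |s - t|

/-- the pointwise infimum of a nonempty family of distance-like
functions, if finite everywhere, is distance-like. -/
theorem distanceLike_iInf {X : Type*} [MetricSpace X] {I : Type*} [Nonempty I]
    (f : I → X → ℝ) (hf : ∀ α, DistanceLike (f α))
    (hbd : ∀ x, BddBelow (Set.range fun α => f α x)) :
    DistanceLike (fun x => ⨅ α, f α x) := by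
  set g : X → ℝ := fun x => ⨅ α, f α x with hg
  have hgle : ∀ α x, g x ≤ f α x := fun α x => ciInf_le (hbd x) α
  -- each f α is 1-Lipschitz
  have hlip : ∀ α (x y : X), f α x ≤ f α y + dist x y := by
    intro α x y
    rcases le_or_gt (f α y) (f α x) with h | h
    · have h1 := hf α x (f α y) h
      have h2 : sInf (dist x '' {z | f α z ≤ f α y}) ≤ dist x y := by
        apply csInf_le ⟨0, by rintro d ⟨z, hz, rfl⟩; exact dist_nonneg⟩
        exact ⟨y, le_refl (f α y), rfl⟩
      rw [h1] at h2
      linarith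
    · linarith [dist_nonneg (x := x) (y := y)]
  -- g is 1-Lipschitz
  have hglip : ∀ x y : X, g x ≤ g y + dist x y := by
    intro x y
    have h : ∀ α, g x - dist x y ≤ f α y := fun α => by
      linarith [hgle α x, hlip α x y]
    linarith [le_ciInf h]
  -- sublevel sets of f α are nonempty
  have hne : ∀ α (x : X) (t : ℝ), t ≤ f α x → ({y | f α y ≤ t}).Nonempty := by
    intro α x t ht
    by_contra h
    rw [Set.not_nonempty_iff_eq_empty] at h
    have h1 := hf α x t ht
    rw [h, Set.image_empty, Real.sInf_empty] at h1
    have hx : f α x = t := by linarith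
    exact (Set.eq_empty_iff_forall_notMem.mp h x) (le_of_eq hx)
  intro x t ht
  have hgx : ∀ α, t ≤ f α x := fun α => le_trans ht (hgle α x)
  obtain ⟨α0⟩ := ‹Nonempty I›
  obtain ⟨y0, hy0⟩ := hne α0 x t (hgx α0)
  have hbig : ({y : X | g y ≤ t}).Nonempty := ⟨y0, le_trans (hgle α0 y0) hy0⟩
  have hbdd : BddBelow (dist x '' {y : X | g y ≤ t}) :=
    ⟨0, by rintro d ⟨z, hz, rfl⟩; exact dist_nonneg⟩
  apply le_antisymm
  · apply le_of_forall_pos_le_add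
    intro ε hε
    have : g x < g x + ε := by linarith
    obtain ⟨α, hα⟩ := exists_lt_of_ciInf_lt this
    have hsub : {y : X | f α y ≤ t} ⊆ {y : X | g y ≤ t} :=
      fun y hy => le_trans (hgle α y) hy
    have h1 : sInf (dist x '' {y : X | g y ≤ t}) ≤ sInf (dist x '' {y : X | f α y ≤ t}) :=
      csInf_le_csInf hbdd ((hne α x t (hgx α)).image _) (Set.image_mono hsub)
    rw [hf α x t (hgx α)] at h1
    linarith
  · apply le_csInf (hbig.image _)
    rintro d ⟨z, hz, rfl⟩
    have := hglip x z
    have hz' : g z ≤ t := hz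
    linarith
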